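/- arXiv:0807.4085 — 4 statements merged into one kernel-verified Lean document; each statement's English description precedes it below -/
import Mathlib

section
/- If δ is a locally nilpotent ℂ[t,t⁻¹]-derivation of A[w] ⊗_{ℂ[t]} ℂ[t,t⁻¹], where A[w] is a finitely generated ℂ-algebra containing t, then there exists k ≥ 0 such that t^k·δ maps A[w] into itself and the restriction of t^k·δ to A[w] is a locally nilpotent derivation of A[w]. -/
/-- If `B` is a finitely generated ℂ-algebra, `t ∈ B` a nonzerodivisor (so that `B` embeds
in the localization `B_t`), and `δ` is a locally nilpotent derivation of `B_t`
annihilating `t`, then for some `k ≥ 0` the derivation `t^k·δ` maps `B` into itself and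
restricts to a locally nilpotent derivation of `B`. -/
theorem stmt8 (B : Type) [CommRing B] [Algebra ℂ B] [Algebra.FiniteType ℂ B]
    (t : B) (hinj : Function.Injective (algebraMap B (Localization.Away t)))
    (δ : Derivation ℂ (Localization.Away t) (Localization.Away t))
    (hδt : δ (algebraMap B (Localization.Away t) t) = 0)
    (hln : ∀ a : Localization.Away t, ∃ n : ℕ, (δ.toLinearMap ^ n) a = 0) :
    ∃ (k : ℕ) (d : Derivation ℂ B B),
      (∀ b : B,
        algebraMap B (Localization.Away t) (d b) =
          (algebraMap B (Localization.Away t) t) ^ k * δ (algebraMap B (Localization.Away t) b)) ∧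
      (∀ b : B, ∃ n : ℕ, (d.toLinearMap ^ n) b = 0) := by
  classical
  set L := Localization.Away t with hL
  set f := algebraMap B L with hf
  -- every element of L can be cleared of denominators
  have H : ∀ x : L, ∃ m : ℕ, f t ^ m * x ∈ f.range := by
    intro x
    obtain ⟨⟨b, s⟩, hs⟩ := IsLocalization.surj (Submonoid.powers t) x
    obtain ⟨m, hm⟩ := s.2
    have hm' : t ^ m = (s : B) := hm
    refine ⟨m, b, ?_⟩
    rw [← map_pow, hm', ← hs]
    exact mul_comm _ _
  -- monotonicity
  have mon : ∀ (x : L) (m m' : ℕ), m ≤ m' → f t ^ m * x ∈ f.range →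
      f t ^ m' * x ∈ f.range := by
    intro x m m' hmm hx
    have : f t ^ m' * x = f t ^ (m' - m) * (f t ^ m * x) := by
      rw [← mul_assoc, ← pow_add, Nat.sub_add_cancel hmm]
    rw [this]
    exact mul_mem (pow_mem (⟨t, rfl⟩ : f t ∈ f.range) _) hx
  obtain ⟨s, hs⟩ := (inferInstance : Algebra.FiniteType ℂ B).out
  set N : B → ℕ := fun b => (H (δ (f b))).choose with hN
  set k := s.sup N with hk
  have hfs : ∀ (c : ℂ) (b : B), f (c • b) = c • f b := by
    intro c b
    rw [Algebra.smul_def, map_mul, ← IsScalarTower.algebraMap_apply, ← Algebra.smul_def]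
  -- t^k • δ maps B into B
  have key : ∀ b : B, f t ^ k * δ (f b) ∈ f.range := by
    intro b
    have hb : b ∈ Algebra.adjoin ℂ (s : Set B) := hs ▸ Algebra.mem_top
    induction hb using Algebra.adjoin_induction with
    | mem x hx =>
        exact mon _ _ _ (Finset.le_sup hx) (H (δ (f x))).choose_spec
    | algebraMap r =>
        have : f (algebraMap ℂ B r) = algebraMap ℂ L r :=
          (IsScalarTower.algebraMap_apply ℂ B L r).symm
        rw [this, Derivation.map_algebraMap, mul_zero]
        exact zero_mem _
    | add x y hx hy ihx ihy =>
        rw [map_add, map_add, mul_add]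
        exact add_mem ihx ihy
    | mul x y hx hy ihx ihy =>
        rw [map_mul, Derivation.leibniz, smul_eq_mul, smul_eq_mul, mul_add]
        have e1 : f t ^ k * (f x * δ (f y)) = f x * (f t ^ k * δ (f y)) := by ring
        have e2 : f t ^ k * (f y * δ (f x)) = f y * (f t ^ k * δ (f x)) := by ring
        rw [e1, e2]
        exact add_mem (mul_mem ⟨x, rfl⟩ ihy) (mul_mem ⟨y, rfl⟩ ihx)
  -- define the function d0
  set d0 : B → B := fun b => (key b).choose with hd0
  have spec : ∀ b : B, f (d0 b) = f t ^ k * δ (f b) := fun b => (key b).choose_spec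
  -- d0 is a derivation
  have hadd : ∀ a b : B, d0 (a + b) = d0 a + d0 b := by
    intro a b
    apply hinj
    rw [map_add, spec, spec, spec, map_add, map_add, mul_add]
  have hsmul : ∀ (c : ℂ) (b : B), d0 (c • b) = c • d0 b := by
    intro c b
    apply hinj
    rw [spec, hfs, hfs, Derivation.map_smul, spec, mul_smul_comm]
  have hone : d0 1 = 0 := by
    apply hinj
    rw [spec, map_one, Derivation.map_one_eq_zero, mul_zero, map_zero]
  have hleib : ∀ a b : B, d0 (a * b) = a * d0 b + b * d0 a := by
    intro a b
    apply hinj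
    rw [spec, map_mul, Derivation.leibniz, smul_eq_mul, smul_eq_mul, map_add, map_mul,
      map_mul, spec, spec]
    ring
  let dl : B →ₗ[ℂ] B :=
    { toFun := d0, map_add' := hadd, map_smul' := fun c b => by simpa using hsmul c b }
  let d : Derivation ℂ B B :=
    { toLinearMap := dl
      map_one_eq_zero' := hone
      leibniz' := fun a b => by simp only [smul_eq_mul]; exact hleib a b }
  have hdapp : ∀ b : B, d.toLinearMap b = d0 b := fun _ => rfl
  refine ⟨k, d, fun b => spec b, ?_⟩
  -- local nilpotency
  have hδtk : ∀ x : L, δ (f t ^ k * x) = f t ^ k * δ x := by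
    intro x
    simp [Derivation.leibniz, Derivation.leibniz_pow, hδt, smul_eq_mul]
  have hδtkn : ∀ (n : ℕ) (x : L), (δ.toLinearMap ^ n) (f t ^ k * x) =
      f t ^ k * (δ.toLinearMap ^ n) x := by
    intro n
    induction n with
    | zero => intro x; simp
    | succ n ih =>
        intro x
        have e : ∀ y : L, (δ.toLinearMap ^ (n + 1)) y = (δ.toLinearMap ^ n) (δ y) :=
          fun y => by rw [pow_succ, Module.End.mul_apply]; rfl
        rw [e, e, show (δ (f t ^ k * x) : L) = f t ^ k * δ x from hδtk x, ih]
  have main : ∀ (n : ℕ) (b : B), f ((d.toLinearMap ^ n) b) =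
      f t ^ (n * k) * (δ.toLinearMap ^ n) (f b) := by
    intro n
    induction n with
    | zero => intro b; simp
    | succ n ih =>
        intro b
        have e : (d.toLinearMap ^ (n + 1)) b = (d.toLinearMap ^ n) (d0 b) := by
          rw [pow_succ, Module.End.mul_apply]; rfl
        have e2 : (δ.toLinearMap ^ (n + 1)) (f b) = (δ.toLinearMap ^ n) (δ (f b)) := by
          rw [pow_succ, Module.End.mul_apply]; rfl
        rw [e, ih (d0 b), spec, hδtkn, e2, ← mul_assoc, ← pow_add,
          show n * k + k = (n + 1) * k by ring]
  intro b
  obtain ⟨n, hn⟩ := hln (f b)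
  refine ⟨n, hinj ?_⟩
  rw [main, hn, mul_zero, map_zero]
end

section
/- The intersection of the kernels of the two locally nilpotent derivations ∂₁ and ∂₂ of A = ℂ[x,y,z,t]/(x + x²y + z² + t³), induced by x²∂_z − 2z∂_y and x²∂_t − 3t²∂_y respectively, equals ℂ[x]. -/
set_option synthInstance.maxHeartbeats 1000000
set_option maxHeartbeats 1000000

open MvPolynomial

/-- The defining polynomial `x + x²y + z² + t³` of the Koras-Russell cubic threefold
(variables `0 ↦ x`, `1 ↦ y`, `2 ↦ z`, `3 ↦ t`). -/
noncomputable def f13 : MvPolynomial (Fin 4) ℂ :=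
  X 0 + (X 0) ^ 2 * X 1 + (X 2) ^ 2 + (X 3) ^ 3

/-- The coordinate ring `A = ℂ[x,y,z,t]/(x + x²y + z² + t³)`. -/
abbrev A13 : Type := MvPolynomial (Fin 4) ℂ ⧸ Ideal.span {f13}

/-- The derivation `x²∂_z − 2z∂_y` of `ℂ[x,y,z,t]`. -/
noncomputable def D13a : Derivation ℂ (MvPolynomial (Fin 4) ℂ) (MvPolynomial (Fin 4) ℂ) :=
  MvPolynomial.mkDerivation ℂ ![0, -2 * X 2, (X 0) ^ 2, 0]

/-- The derivation `x²∂_t − 3t²∂_y` of `ℂ[x,y,z,t]`. -/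
noncomputable def D13b : Derivation ℂ (MvPolynomial (Fin 4) ℂ) (MvPolynomial (Fin 4) ℂ) :=
  MvPolynomial.mkDerivation ℂ ![0, -3 * (X 3) ^ 2, 0, (X 0) ^ 2]

namespace KR13

abbrev P13 := MvPolynomial (Fin 4) ℂ

lemma D13a_apply (p : P13) :
    D13a p = X 0 ^ 2 * pderiv 2 p - (2 * X 2) * pderiv 1 p := by
  have : D13a = (X 0 ^ 2 : P13) • (pderiv 2 : Derivation ℂ P13 P13)
      - (2 * X 2 : P13) • (pderiv 1 : Derivation ℂ P13 P13) := by
    apply derivation_ext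
    intro i
    fin_cases i <;>
      simp [D13a, mkDerivation_X, Derivation.sub_apply, Derivation.smul_apply]
  rw [this]
  simp [Derivation.sub_apply, Derivation.smul_apply, smul_eq_mul]

lemma D13b_apply (p : P13) :
    D13b p = X 0 ^ 2 * pderiv 3 p - (3 * X 3 ^ 2) * pderiv 1 p := by
  have : D13b = (X 0 ^ 2 : P13) • (pderiv 3 : Derivation ℂ P13 P13)
      - (3 * X 3 ^ 2 : P13) • (pderiv 1 : Derivation ℂ P13 P13) := by
    apply derivation_ext
    intro i
    fin_cases i <;>
      simp [D13b, mkDerivation_X, Derivation.sub_apply, Derivation.smul_apply]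
  rw [this]
  simp [Derivation.sub_apply, Derivation.smul_apply, smul_eq_mul]

lemma D13a_X0 : D13a (X 0 : P13) = 0 := by
  simp [D13a, mkDerivation_X]

lemma D13b_X0 : D13b (X 0 : P13) = 0 := by
  simp [D13b, mkDerivation_X]

lemma D13a_f13 : D13a f13 = 0 := by
  rw [D13a_apply]
  simp [f13]
  ring

lemma D13b_f13 : D13b f13 = 0 := by
  rw [D13b_apply]
  simp [f13]
  ring

/-- The algebra homomorphism separating the variable `y = X 1`. -/
noncomputable def phi13 : P13 →ₐ[ℂ] Polynomial P13 :=
  aeval (fun i => if i = 1 then Polynomial.X else Polynomial.C (X i))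

lemma phi13_retract (p : P13) : Polynomial.eval (X 1) (phi13 p) = p := by
  induction p using MvPolynomial.induction_on with
  | C a => simp [phi13, algebraMap_eq]
  | add p q hp hq => simp [map_add, hp, hq]
  | mul_X p i hp =>
    rw [map_mul, Polynomial.eval_mul, hp]
    by_cases h : i = 1
    · subst h; simp [phi13]
    · simp [phi13, h]

lemma phi13_inj : Function.Injective phi13 := by
  intro a b h
  have := congrArg (Polynomial.eval (X 1)) h
  rwa [phi13_retract, phi13_retract] at this

/-- `B n p` : the `y`-degree of `p` is at most `n`. -/
def B (n : ℕ) (p : P13) : Prop := ∀ m ∈ p.support, m 1 ≤ n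

lemma B.mono {n k : ℕ} (h : n ≤ k) {p : P13} (hp : B n p) : B k p :=
  fun m hm => (hp m hm).trans h

lemma B.add {n : ℕ} {p q : P13} (hp : B n p) (hq : B n q) : B n (p + q) := by
  intro m hm
  rcases Finset.mem_union.1 (MvPolynomial.support_add hm) with h | h
  exacts [hp m h, hq m h]

lemma B.neg {n : ℕ} {p : P13} (hp : B n p) : B n (-p) := by
  intro m hm; rw [MvPolynomial.support_neg] at hm; exact hp m hm

lemma B.sub {n : ℕ} {p q : P13} (hp : B n p) (hq : B n q) : B n (p - q) := by
  rw [sub_eq_add_neg]; exact hp.add hq.neg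

lemma B.mul {n k : ℕ} {p q : P13} (hp : B n p) (hq : B k q) : B (n + k) (p * q) := by
  intro m hm
  obtain ⟨a, ha, b, hb, rfl⟩ := Finset.mem_add.1 (MvPolynomial.support_mul p q hm)
  exact add_le_add (hp a ha) (hq b hb)

lemma B.monX {i : Fin 4} (hi : i ≠ 1) {k : ℕ} : B 0 ((X i : P13) ^ k) := by
  intro m hm
  rw [MvPolynomial.X_pow_eq_monomial] at hm
  rw [MvPolynomial.support_monomial, if_neg one_ne_zero] at hm
  rcases Finset.mem_singleton.1 hm with h
  simp [h, Finsupp.single_apply, hi]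

lemma B.X0 : B 0 (X 0 : P13) := by simpa using B.monX (by decide) (k := 1)
lemma B_X0_sq : B 0 ((X 0 : P13) ^ 2) := B.monX (by decide)
lemma B_g : B 0 (X 0 + X 2 ^ 2 + X 3 ^ 3 : P13) :=
  (B.X0.add (B.monX (by decide))).add (B.monX (by decide))

lemma phi13_of_B0 {p : P13} (hp : B 0 p) : phi13 p = Polynomial.C p := by
  conv_lhs => rw [p.as_sum]
  rw [map_sum]
  conv_rhs => rw [p.as_sum, map_sum]
  apply Finset.sum_congr rfl
  intro m hm
  have hm1 : m 1 = 0 := Nat.le_zero.1 (hp m hm)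
  rw [phi13, aeval_monomial]
  rw [monomial_eq]
  have : (m.prod fun i k => (if i = 1 then Polynomial.X else Polynomial.C (X i : P13)) ^ k)
      = Polynomial.C (m.prod fun i k => (X i : P13) ^ k) := by
    rw [Finsupp.prod, Finsupp.prod, map_prod]
    apply Finset.prod_congr rfl
    intro i hi
    have : i ≠ 1 := by
      intro h; subst h; exact (Finsupp.mem_support_iff.1 hi) hm1
    rw [if_neg this, map_pow]
  rw [this]
  simp [algebraMap_eq, map_mul]

lemma phi13_f13 :
    phi13 f13 = Polynomial.C ((X 0 : P13) ^ 2) * Polynomial.X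
      + Polynomial.C (X 0 + X 2 ^ 2 + X 3 ^ 3 : P13) := by
  simp [phi13, f13, map_add, map_mul, map_pow]
  ring

lemma mem_supp_sum {α : Type*} (s : Finset α) (t : α → (Fin 4 →₀ ℕ)) (c : α → ℂ)
    {m : Fin 4 →₀ ℕ} (hm : m ∈ (∑ a ∈ s, monomial (t a) (c a)).support) :
    ∃ a ∈ s, m = t a := by
  by_contra hcon
  push_neg at hcon
  apply MvPolynomial.mem_support_iff.1 hm
  rw [MvPolynomial.coeff_sum]
  apply Finset.sum_eq_zero
  intro a ha
  rw [MvPolynomial.coeff_monomial, if_neg]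
  intro h
  exact hcon a ha h.symm

lemma pderiv_as_sum (i : Fin 4) (p : P13) :
    pderiv i p = ∑ m ∈ p.support, monomial (m - Finsupp.single i 1) (coeff m p * (m i)) := by
  conv_lhs => rw [p.as_sum]
  rw [map_sum]
  apply Finset.sum_congr rfl
  intro m _
  rw [pderiv_monomial]

lemma B.pderiv {n : ℕ} {p : P13} (hp : B n p) (i : Fin 4) : B n (MvPolynomial.pderiv i p) := by
  intro m hm
  rw [pderiv_as_sum] at hm
  obtain ⟨a, ha, rfl⟩ := mem_supp_sum _ _ _ hm
  refine le_trans ?_ (hp a ha)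
  rw [Finsupp.tsub_apply]
  omega

lemma pderiv1_eq_zero {p : P13} (hp : B 0 p) : pderiv 1 p = 0 := by
  rw [pderiv_as_sum]
  apply Finset.sum_eq_zero
  intro m hm
  have : m 1 = 0 := Nat.le_zero.1 (hp m hm)
  rw [this]
  simp

lemma exponent_zero_of_pderiv {i : Fin 4} {p : P13} (h : pderiv i p = 0) :
    ∀ m ∈ p.support, m i = 0 := by
  intro m hm
  by_contra hmi
  have hc : coeff (m - Finsupp.single i 1) (pderiv i p) = coeff m p * (m i) := by
    rw [pderiv_as_sum, MvPolynomial.coeff_sum]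
    rw [Finset.sum_eq_single m]
    · rw [MvPolynomial.coeff_monomial, if_pos rfl]
    · intro b hb hbm
      rw [MvPolynomial.coeff_monomial]
      by_cases hbi : b i = 0
      · rw [hbi]; simp
      · rw [if_neg]
        intro he
        apply hbm
        ext j
        have h2 := DFunLike.congr_fun he j
        by_cases hj : j = i
        · subst hj
          rw [Finsupp.tsub_apply, Finsupp.tsub_apply, Finsupp.single_eq_same] at h2
          have hb1 : b j ≠ 0 := hbi
          have hm1 : m j ≠ 0 := hmi
          omega
        · rw [Finsupp.tsub_apply, Finsupp.tsub_apply,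
            Finsupp.single_eq_of_ne' (Ne.symm hj)] at h2
          omega
    · intro hmm; exact absurd hm hmm
  rw [h] at hc
  simp only [MvPolynomial.coeff_zero] at hc
  have h1 : coeff m p ≠ 0 := MvPolynomial.mem_support_iff.1 hm
  have h2 : ((m i : ℂ)) ≠ 0 := Nat.cast_ne_zero.2 hmi
  exact mul_ne_zero h1 h2 hc.symm

lemma F3 {s : P13} (h1 : s ∈ Ideal.span {f13}) (h2 : B 0 s) : s = 0 := by
  obtain ⟨u, hu⟩ := Ideal.mem_span_singleton.1 h1
  by_contra hs
  have hu0 : u ≠ 0 := by rintro rfl; simp at hu; exact hs hu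
  have hphi : phi13 s = phi13 f13 * phi13 u := by rw [hu, map_mul]
  rw [phi13_of_B0 h2, phi13_f13] at hphi
  have hX2 : ((X 0 : P13) ^ 2) ≠ 0 := pow_ne_zero _ (MvPolynomial.X_ne_zero _)
  have hdeg1 : (Polynomial.C ((X 0 : P13) ^ 2) * Polynomial.X
      + Polynomial.C (X 0 + X 2 ^ 2 + X 3 ^ 3 : P13)).natDegree = 1 :=
    Polynomial.natDegree_linear hX2
  have hne : (Polynomial.C ((X 0 : P13) ^ 2) * Polynomial.X
      + Polynomial.C (X 0 + X 2 ^ 2 + X 3 ^ 3 : P13)) ≠ 0 := by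
    intro h0
    rw [h0] at hdeg1
    simp at hdeg1
  have hphiu : phi13 u ≠ 0 := by
    intro h0
    apply hu0
    apply phi13_inj
    rw [h0, map_zero]
  have := congrArg Polynomial.natDegree hphi
  rw [Polynomial.natDegree_C, Polynomial.natDegree_mul hne hphiu, hdeg1] at this
  omega

lemma primeX0 : Prime (X 0 : P13) := by
  rw [← MulEquiv.prime_iff (p := (X 0 : P13)) (MvPolynomial.finSuccEquiv ℂ 3).toRingEquiv.toMulEquiv]
  rw [show ((MvPolynomial.finSuccEquiv ℂ 3).toRingEquiv.toMulEquiv (X 0)) = Polynomial.X from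
    finSuccEquiv_X_zero]
  exact Polynomial.prime_X

lemma X0_not_dvd_f13 : ¬ (X 0 : P13) ∣ f13 := by
  rintro ⟨v, hv⟩
  have := congrArg (aeval (fun i : Fin 4 => if i = 2 then (1 : ℂ) else 0)) hv
  simp [f13] at this

def Good (p : P13) : Prop :=
  ∃ q ∈ Algebra.adjoin ℂ ({X 0} : Set P13), p - q ∈ Ideal.span {f13}

lemma Good.cancelX0 {w : P13} (h : Good (X 0 * w)) : Good w := by
  obtain ⟨q, hq, hmem⟩ := h
  rw [Algebra.adjoin_singleton_eq_range_aeval] at hq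
  obtain ⟨h, rfl⟩ := hq
  replace hmem : X 0 * w - (Polynomial.aeval (X 0 : P13)) h ∈ Ideal.span {f13} := hmem
  set c := h.coeff 0 with hc
  set q₁ := Polynomial.aeval (X 0 : P13) h.divX with hq₁
  have hqdec : Polynomial.aeval (X 0 : P13) h = X 0 * q₁ + C c := by
    conv_lhs => rw [← Polynomial.X_mul_divX_add h]
    rw [map_add, map_mul, Polynomial.aeval_X, Polynomial.aeval_C]
    rw [algebraMap_eq]
  obtain ⟨u, hu⟩ := Ideal.mem_span_singleton.1 hmem
  rw [hqdec] at hu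
  have hc0 : c = 0 := by
    have h0 := congrArg (aeval (fun _ : Fin 4 => (0 : ℂ))) hu
    simpa [f13] using h0
  rw [hc0] at hu
  simp only [map_zero, add_zero] at hu
  have hu' : (X 0 : P13) * (w - q₁) = f13 * u := by rw [mul_sub]; exact hu
  have hdvd : (X 0 : P13) ∣ f13 * u := ⟨w - q₁, hu'.symm⟩
  rcases (primeX0.2.2 _ _ hdvd) with h | h
  · exact absurd h X0_not_dvd_f13
  obtain ⟨u₁, rfl⟩ := h
  have : w - q₁ = f13 * u₁ := by
    apply mul_left_cancel₀ (MvPolynomial.X_ne_zero (R := ℂ) (σ := Fin 4) 0)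
    rw [hu']; ring
  refine ⟨q₁, ?_, ?_⟩
  · rw [Algebra.adjoin_singleton_eq_range_aeval]
    exact ⟨h.divX, rfl⟩
  · rw [this]
    exact Ideal.mem_span_singleton.2 ⟨u₁, rfl⟩

lemma mem_adjoinX0 {p : P13}
    (h : ∀ m ∈ p.support, m 1 = 0 ∧ m 2 = 0 ∧ m 3 = 0) :
    p ∈ Algebra.adjoin ℂ ({X 0} : Set P13) := by
  have hset : ({X 0} : Set P13) = X '' ({0} : Set (Fin 4)) := by simp
  rw [hset, ← supported_eq_adjoin_X, mem_supported]
  intro i hi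
  rw [Finset.mem_coe, mem_vars] at hi
  obtain ⟨d, hd, hid⟩ := hi
  obtain ⟨h1, h2, h3⟩ := h d hd
  have hne : d i ≠ 0 := Finsupp.mem_support_iff.1 hid
  fin_cases i
  · rfl
  · exact absurd h1 hne
  · exact absurd h2 hne
  · exact absurd h3 hne

lemma X0sq_ne : ((X 0 : P13) ^ 2) ≠ 0 := pow_ne_zero _ (MvPolynomial.X_ne_zero _)

lemma main (n : ℕ) : ∀ p : P13, B n p → D13a p ∈ Ideal.span {f13} →
    D13b p ∈ Ideal.span {f13} → Good p := by
  induction n with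
  | zero =>
    intro p hB h1 h2
    have hp1 : pderiv 1 p = 0 := pderiv1_eq_zero hB
    have hd1 : D13a p = X 0 ^ 2 * pderiv 2 p := by
      rw [D13a_apply, hp1, mul_zero, sub_zero]
    have hd2 : D13b p = X 0 ^ 2 * pderiv 3 p := by
      rw [D13b_apply, hp1, mul_zero, sub_zero]
    rw [hd1] at h1
    rw [hd2] at h2
    have hz2 : pderiv 2 p = 0 := by
      have h0 := F3 h1 (by simpa using B_X0_sq.mul (hB.pderiv 2))
      rcases mul_eq_zero.1 h0 with h | h
      · exact absurd h X0sq_ne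
      · exact h
    have hz3 : pderiv 3 p = 0 := by
      have h0 := F3 h2 (by simpa using B_X0_sq.mul (hB.pderiv 3))
      rcases mul_eq_zero.1 h0 with h | h
      · exact absurd h X0sq_ne
      · exact h
    refine ⟨p, mem_adjoinX0 (fun m hm => ⟨Nat.le_zero.1 (hB m hm),
      exponent_zero_of_pderiv hz2 m hm, exponent_zero_of_pderiv hz3 m hm⟩), ?_⟩
    simpa using Ideal.zero_mem _
  | succ n ih =>
    intro p hB h1 h2
    set p₀ : P13 := ∑ m ∈ p.support.filter (fun m => m 1 = 0), monomial m (coeff m p) with hp₀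
    set p₁ : P13 := ∑ m ∈ p.support.filter (fun m => ¬ m 1 = 0),
      monomial (m - Finsupp.single 1 1) (coeff m p) with hp₁
    have hsplit : p = p₀ + X 1 * p₁ := by
      conv_lhs => rw [p.as_sum]
      rw [← Finset.sum_filter_add_sum_filter_not p.support (fun m => m 1 = 0)]
      congr 1
      rw [hp₁, Finset.mul_sum]
      apply Finset.sum_congr rfl
      intro m hm
      have hm1 : m 1 ≠ 0 := (Finset.mem_filter.1 hm).2
      rw [show (X 1 : P13) = monomial (Finsupp.single 1 1) 1 by
          rw [← X_pow_eq_monomial, pow_one]]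
      rw [monomial_mul, one_mul]
      have hmm : (Finsupp.single (1 : Fin 4) 1 + (m - Finsupp.single 1 1)) = m := by
        ext j
        rw [Finsupp.add_apply, Finsupp.tsub_apply]
        by_cases hj : j = 1
        · subst hj; rw [Finsupp.single_eq_same]; omega
        · rw [Finsupp.single_eq_of_ne' (Ne.symm hj)]; omega
      rw [hmm]
    have hB0 : B 0 p₀ := by
      intro m hm
      obtain ⟨a, ha, rfl⟩ := mem_supp_sum _ _ _ hm
      simp [(Finset.mem_filter.1 ha).2]
    have hB1 : B n p₁ := by
      intro m hm
      obtain ⟨a, ha, rfl⟩ := mem_supp_sum _ _ _ hm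
      have h1a : a 1 ≤ n + 1 := hB a (Finset.mem_filter.1 ha).1
      rw [Finsupp.tsub_apply, Finsupp.single_eq_same]
      omega
    set p' : P13 := X 0 ^ 2 * p₀ - (X 0 + X 2 ^ 2 + X 3 ^ 3) * p₁ with hp'
    have hB' : B n p' :=
      ((B_X0_sq.mul hB0).mono (by omega)).sub (by simpa using B_g.mul hB1)
    have hid : X 0 ^ 2 * p = p' + f13 * p₁ := by
      rw [hsplit, hp', f13]; ring
    have hp'eq : p' = X 0 ^ 2 * p - f13 * p₁ := eq_sub_of_add_eq hid.symm
    have hDsq : D13a ((X 0 : P13) ^ 2) = 0 := by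
      rw [pow_two, Derivation.leibniz, D13a_X0]; simp
    have hDsqb : D13b ((X 0 : P13) ^ 2) = 0 := by
      rw [pow_two, Derivation.leibniz, D13b_X0]; simp
    have hfmem : f13 ∈ Ideal.span ({f13} : Set P13) := Ideal.subset_span rfl
    have hD1' : D13a p' ∈ Ideal.span {f13} := by
      rw [hp'eq, map_sub, Derivation.leibniz, Derivation.leibniz, hDsq, D13a_f13]
      simp only [smul_eq_mul, mul_zero, smul_zero, add_zero]
      exact Ideal.sub_mem _ (Ideal.mul_mem_left _ _ h1)
        (Ideal.mul_mem_right _ _ hfmem)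
    have hD2' : D13b p' ∈ Ideal.span {f13} := by
      rw [hp'eq, map_sub, Derivation.leibniz, Derivation.leibniz, hDsqb, D13b_f13]
      simp only [smul_eq_mul, mul_zero, smul_zero, add_zero]
      exact Ideal.sub_mem _ (Ideal.mul_mem_left _ _ h2)
        (Ideal.mul_mem_right _ _ hfmem)
    obtain ⟨q, hq, hr⟩ := ih p' hB' hD1' hD2'
    have hgood : Good (X 0 * (X 0 * p)) := by
      refine ⟨q, hq, ?_⟩
      have e1 : X 0 * (X 0 * p) - q = (p' - q) + f13 * p₁ := by
        have e2 : X 0 * (X 0 * p) = X 0 ^ 2 * p := by ring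
        rw [e2, hid]; ring
      rw [e1]
      exact Ideal.add_mem _ hr (Ideal.mul_mem_right _ _ hfmem)
    exact hgood.cancelX0.cancelX0

end KR13

open KR13 in
/-- The intersection of the kernels of the two locally nilpotent derivations `∂₁`, `∂₂`
of `A = ℂ[x,y,z,t]/(x + x²y + z² + t³)` induced by `x²∂_z − 2z∂_y` and
`x²∂_t − 3t²∂_y` equals `ℂ[x]`. -/
theorem stmt13 (d₁ d₂ : Derivation ℂ A13 A13)
    (h₁ : ∀ p : MvPolynomial (Fin 4) ℂ,
      d₁ (Ideal.Quotient.mk (Ideal.span {f13}) p) =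
        Ideal.Quotient.mk (Ideal.span {f13}) (D13a p))
    (h₂ : ∀ p : MvPolynomial (Fin 4) ℂ,
      d₂ (Ideal.Quotient.mk (Ideal.span {f13}) p) =
        Ideal.Quotient.mk (Ideal.span {f13}) (D13b p)) :
    ∀ a : A13,
      (d₁ a = 0 ∧ d₂ a = 0) ↔
        a ∈ Algebra.adjoin ℂ {Ideal.Quotient.mk (Ideal.span {f13}) (X 0)} := by
  intro a
  obtain ⟨p, rfl⟩ := Ideal.Quotient.mk_surjective a
  constructor
  · rintro ⟨ha1, ha2⟩
    rw [h₁] at ha1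
    rw [h₂] at ha2
    have hm1 : D13a p ∈ Ideal.span {f13} := Ideal.Quotient.eq_zero_iff_mem.1 ha1
    have hm2 : D13b p ∈ Ideal.span {f13} := Ideal.Quotient.eq_zero_iff_mem.1 ha2
    obtain ⟨q, hq, hr⟩ := main (p.support.sup (fun m => m 1)) p
      (fun m hm => Finset.le_sup (f := fun m => m 1) hm) hm1 hm2
    have heq : Ideal.Quotient.mk (Ideal.span {f13}) p
        = Ideal.Quotient.mk (Ideal.span {f13}) q := by
      rwa [Ideal.Quotient.mk_eq_mk_iff_sub_mem]
    rw [heq]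
    have hmap : Ideal.Quotient.mk (Ideal.span {f13}) q ∈
        (Algebra.adjoin ℂ ({X 0} : Set P13)).map (Ideal.Quotient.mkₐ ℂ (Ideal.span {f13})) :=
      ⟨q, hq, rfl⟩
    rwa [AlgHom.map_adjoin, Set.image_singleton, Ideal.Quotient.mkₐ_eq_mk] at hmap
  · intro ha
    have key : ∀ x ∈ Algebra.adjoin ℂ
        ({Ideal.Quotient.mk (Ideal.span {f13}) (X 0)} : Set A13),
        d₁ x = 0 ∧ d₂ x = 0 := by
      intro x hx
      induction hx using Algebra.adjoin_induction with
      | mem y hy =>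
        rcases hy with rfl
        constructor
        · rw [h₁, D13a_X0, map_zero]
        · rw [h₂, D13b_X0, map_zero]
      | algebraMap r => exact ⟨Derivation.map_algebraMap _ _, Derivation.map_algebraMap _ _⟩
      | add y z _ _ hy hz => exact ⟨by rw [map_add, hy.1, hz.1, add_zero],
          by rw [map_add, hy.2, hz.2, add_zero]⟩
      | mul y z _ _ hy hz => exact ⟨by rw [Derivation.leibniz, hy.1, hz.1]; simp,
          by rw [Derivation.leibniz, hy.2, hz.2]; simp⟩
    exact key _ ha
end

section
/- For the derivation D = x²∂_y + 2y∂_z of ℂ[x,y,z,t^{±1}] (with D(x)=D(t)=0), the induced 𝔾_a-action on X₂ = {x²z = y² + x − t³} is set-theoretically free: for any point p of X₂ and any s ≠ 0 in 𝔾_a, the flow of the action moves p. Equivalently, the exponential action (s,(x,y,z,t)) ↦ (x, y + x²s, z + 2ys + x²s², t) has no fixed points on X₂ for s ≠ 0. -/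
/-- The `𝔾_a`-action `exp(sD)` on `X₂ = {x²z = y² + x − t³, t ≠ 0}` associated to the
derivation `D = x²∂_y + 2y∂_z` is set-theoretically free: if a point of `X₂` is fixed by
the flow at time `s`, then `s = 0`. -/
theorem stmt16 (x y z t s : ℂ) (ht : t ≠ 0)
    (heq : x ^ 2 * z - y ^ 2 - x + t ^ 3 = 0)
    (hy : y + x ^ 2 * s = y) (hz : z + 2 * y * s + x ^ 2 * s ^ 2 = z) :
    s = 0 := by
  by_contra hs
  have hx2 : x ^ 2 * s = 0 := by linear_combination hy
  have hx : x = 0 := by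
    have := mul_eq_zero.mp hx2
    rcases this with h | h
    · exact pow_eq_zero_iff (n := 2) (by norm_num) |>.mp h
    · exact absurd h hs
  have hys : 2 * y * s = 0 := by
    have : 2 * y * s + x ^ 2 * s ^ 2 = 0 := by linear_combination hz
    simpa [hx] using this
  have hy0 : y = 0 := by
    rcases mul_eq_zero.mp hys with h | h
    · rcases mul_eq_zero.mp h with h | h
      · norm_num at h
      · exact h
    · exact absurd h hs
  have : t ^ 3 = 0 := by
    have := heq
    rw [hx, hy0] at this
    linear_combination this
  exact ht (pow_eq_zero_iff (n := 3) (by norm_num) |>.mp this)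
end

section
/- If ρ : V → S is a 𝔾_a-torsor (étale locally trivial 𝔾_a-bundle) over a base and V is affine, then the torsor is trivial, i.e. V is isomorphic over S to S × 𝔾_a. In the affine-scheme formulation: if B is the coordinate ring of an affine scheme carrying a locally nilpotent derivation δ admitting a slice s (δ(s) = 1), then B ≅ (ker δ)[s] is a polynomial ring over ker δ. -/
/-- The kernel of a derivation `δ : B → B`, as a subalgebra of `B`. -/
def kerDer (B : Type) [CommRing B] [Algebra ℂ B] (δ : Derivation ℂ B B) :
    Subalgebra ℂ B where
  carrier := {b : B | δ b = 0}
  mul_mem' := by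
    intro a b ha hb
    simp only [Set.mem_setOf_eq] at *
    rw [Derivation.leibniz, ha, hb, smul_zero, smul_zero, add_zero]
  add_mem' := by
    intro a b ha hb
    simp only [Set.mem_setOf_eq] at *
    rw [map_add, ha, hb, add_zero]
  algebraMap_mem' := by
    intro r
    simp [Derivation.map_algebraMap]


open Polynomial

variable {B : Type} [CommRing B] [Algebra ℂ B] (δ : Derivation ℂ B B) (s : B) (hs : δ s = 1)

/-- natural-number smul injectivity in a ℂ-module -/
lemma nsmul_eq_zero_imp {n : ℕ} (hn : n ≠ 0) {b : B} (h : n • b = 0) : b = 0 := by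
  have h2 : (n : ℂ) • b = 0 := by rwa [Nat.cast_smul_eq_nsmul]
  have h3 : ((n : ℂ)⁻¹ * (n : ℂ)) • b = 0 := by rw [mul_smul, h2, smul_zero]
  rwa [inv_mul_cancel₀ (by exact_mod_cast hn), one_smul] at h3

lemma key_deriv (hs : δ s = 1) (p : Polynomial (kerDer B δ)) :
    δ (aeval s p) = aeval s (derivative p) := by
  induction p using Polynomial.induction_on' with
  | add p q hp hq => simp [map_add, hp, hq]
  | monomial n a =>
      rw [aeval_monomial, derivative_monomial, aeval_monomial]
      have ha : δ ((algebraMap (kerDer B δ) B) a) = 0 := a.2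
      rw [Derivation.leibniz, ha, smul_zero, add_zero, Derivation.leibniz_pow, hs]
      simp only [smul_eq_mul, mul_one, nsmul_eq_mul, map_mul, map_natCast]
      cases n with
      | zero => simp
      | succ m =>
        simp only [Nat.add_sub_cancel]
        push_cast
        ring

/-- In a ℂ-algebra, every polynomial has a formal antiderivative. -/
lemma exists_antideriv (A : Type*) [CommRing A] [Algebra ℂ A] (p : Polynomial A) :
    ∃ q : Polynomial A, derivative q = p := by
  induction p using Polynomial.induction_on' with
  | add p r hp hr =>
      obtain ⟨q1, h1⟩ := hp
      obtain ⟨q2, h2⟩ := hr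
      exact ⟨q1 + q2, by rw [map_add, h1, h2]⟩
  | monomial n a =>
      refine ⟨monomial (n + 1) ((((n : ℂ) + 1)⁻¹) • a), ?_⟩
      rw [derivative_monomial, Nat.add_sub_cancel]
      congr 1
      rw [Algebra.smul_def,
        show ((n + 1 : ℕ) : A) = algebraMap ℂ A ((n : ℂ) + 1) by push_cast; simp [map_natCast],
        mul_comm, ← mul_assoc, ← map_mul, mul_inv_cancel₀ (Nat.cast_add_one_ne_zero n), map_one,
        one_mul]

lemma aeval_injective (hs : δ s = 1) :
    Function.Injective (Polynomial.aeval s : Polynomial (kerDer B δ) →ₐ[kerDer B δ] B) := by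
  have main : ∀ (n : ℕ) (p : Polynomial (kerDer B δ)), p.natDegree ≤ n →
      aeval s p = 0 → p = 0 := by
    intro n
    induction n with
    | zero =>
        intro p hdeg h0
        rw [Polynomial.eq_C_of_natDegree_le_zero hdeg] at h0 ⊢
        rw [aeval_C] at h0
        have : p.coeff 0 = 0 := Subtype.ext h0
        rw [this, map_zero]
    | succ n ih =>
        intro p hdeg h0
        have hd : derivative p = 0 := by
          apply ih
          · exact (natDegree_derivative_le p).trans (by omega)
          · rw [← key_deriv δ s hs, h0, map_zero]
        -- all coefficients of index ≥ 1 vanish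
        have hcoeff : ∀ k : ℕ, 1 ≤ k → p.coeff k = 0 := by
          intro k hk
          have := congrArg (fun q => Polynomial.coeff q (k - 1)) hd
          simp only [Polynomial.coeff_derivative, Polynomial.coeff_zero] at this
          rw [Nat.sub_add_cancel hk] at this
          have h2 : (k : ℕ) • p.coeff k = 0 := by
            have : p.coeff k * ((k - 1 : ℕ) + 1 : kerDer B δ) = 0 := this
            rw [← Nat.cast_add_one, Nat.sub_add_cancel hk] at this
            rw [nsmul_eq_mul, mul_comm]
            exact_mod_cast this
          have h3 : (k : ℕ) • (p.coeff k : B) = 0 := by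
            exact_mod_cast congrArg (Subtype.val) h2
          exact Subtype.ext (nsmul_eq_zero_imp (by omega) h3)
        have : p = C (p.coeff 0) := by
          ext k
          cases k with
          | zero => simp
          | succ m => simp [hcoeff (m+1) (by omega), Polynomial.coeff_C]
        rw [this] at h0 ⊢
        rw [aeval_C] at h0
        have h0' : p.coeff 0 = 0 := Subtype.ext h0
        rw [h0', map_zero]
  intro p q h
  have : aeval s (p - q) = 0 := by rw [map_sub, h, sub_self]
  have := main (p - q).natDegree _ le_rfl this
  exact sub_eq_zero.mp this

lemma aeval_surjective (hln : ∀ b : B, ∃ n : ℕ, (δ.toLinearMap ^ n) b = 0) (hs : δ s = 1) :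
    Function.Surjective (Polynomial.aeval s : Polynomial (kerDer B δ) →ₐ[kerDer B δ] B) := by
  have main : ∀ (n : ℕ) (b : B), (δ.toLinearMap ^ n) b = 0 →
      ∃ p : Polynomial (kerDer B δ), aeval s p = b := by
    intro n
    induction n with
    | zero =>
        intro b hb
        simp only [pow_zero, Module.End.one_apply] at hb
        exact ⟨0, by simp [hb]⟩
    | succ n ih =>
        intro b hb
        have hδb : (δ.toLinearMap ^ n) (δ b) = 0 := by
          have := hb
          rw [pow_succ, Module.End.mul_apply] at this
          exact this
        obtain ⟨p, hp⟩ := ih (δ b) hδb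
        obtain ⟨q, hq⟩ := exists_antideriv (kerDer B δ) p
        have hmem : b - aeval s q ∈ kerDer B δ := by
          show δ (b - aeval s q) = 0
          rw [map_sub, key_deriv δ s hs, hq, hp, sub_self]
        refine ⟨C ⟨b - aeval s q, hmem⟩ + q, ?_⟩
        rw [map_add, aeval_C]
        show (b - aeval s q) + aeval s q = b
        ring
  intro b
  obtain ⟨n, hn⟩ := hln b
  exact main n b hn

/-- Slice theorem (algebraic form of the triviality of a `𝔾_a`-torsor over an affine
base): if `δ` is a locally nilpotent derivation of a commutative ℂ-algebra `B` admitting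
a slice `s` (`δ s = 1`), then `B = (ker δ)[s]` — the evaluation map
`(ker δ)[T] → B`, `T ↦ s`, is bijective — and `ker δ ≅ B/(s)` via the natural map. -/
theorem stmt19 (B : Type) [CommRing B] [Algebra ℂ B]
    (δ : Derivation ℂ B B) (hln : ∀ b : B, ∃ n : ℕ, (δ.toLinearMap ^ n) b = 0)
    (s : B) (hs : δ s = 1) :
    Function.Bijective
      (Polynomial.aeval s : Polynomial (kerDer B δ) →ₐ[kerDer B δ] B) ∧
    Function.Bijective
      ((Ideal.Quotient.mk (Ideal.span {s})).comp (kerDer B δ).subtype) := by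
  have hinj := aeval_injective δ s hs
  have hsurj := aeval_surjective δ s hln hs
  have key : ∀ a : kerDer B δ, (a : B) ∈ Ideal.span {s} → a = 0 := by
    intro a ha
    obtain ⟨c, hc⟩ := Ideal.mem_span_singleton'.mp ha
    obtain ⟨p, hp⟩ := hsurj c
    have heq : aeval s (C a) = aeval s (p * X) := by
      rw [aeval_C, map_mul, aeval_X, hp, hc]
      rfl
    have h2 := hinj heq
    simpa using congrArg (fun q => q.coeff 0) h2
  refine ⟨⟨hinj, hsurj⟩, ?_, ?_⟩
  · -- injectivity of the quotient map
    intro a a' h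
    have h' : Ideal.Quotient.mk (Ideal.span {s}) (a : B) =
        Ideal.Quotient.mk (Ideal.span {s}) (a' : B) := h
    rw [Ideal.Quotient.mk_eq_mk_iff_sub_mem] at h'
    have h3 := key ((⟨(a : B), a.2⟩ : kerDer B δ) - ⟨(a' : B), a'.2⟩) h'
    have h4 : (a : B) - (a' : B) = 0 := congrArg Subtype.val h3
    exact Subtype.ext (sub_eq_zero.mp h4)
  · -- surjectivity
    intro x
    obtain ⟨b, rfl⟩ := Ideal.Quotient.mk_surjective x
    obtain ⟨p, hp⟩ := hsurj b
    refine ⟨p.coeff 0, ?_⟩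
    show Ideal.Quotient.mk (Ideal.span {s}) ((p.coeff 0 : B)) = Ideal.Quotient.mk _ b
    rw [Ideal.Quotient.mk_eq_mk_iff_sub_mem]
    have hb : b = s * aeval s (divX p) + (p.coeff 0 : B) := by
      conv_lhs => rw [← hp, ← X_mul_divX_add p]
      rw [map_add, map_mul, aeval_X, aeval_C]
      rfl
    have heq : (p.coeff 0 : B) - b = -(s * aeval s (divX p)) := by
      rw [hb]
      ring
    rw [heq]
    exact neg_mem (Ideal.mem_span_singleton'.mpr ⟨aeval s (divX p), mul_comm _ _⟩)
end
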